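/- arXiv:2309.13698 — 4 statements merged into one kernel-verified Lean document; each statement's English description precedes it below -/
import Mathlib

section
/- For any two binary words v and w, the 2×2 integer matrix T_v defined by T_v = [[2^|v| - (v)_2, (v)_2], [2^|v| - (v)_2 - 1, (v)_2 + 1]] satisfies T_v * T_w = T_{wv}, where wv denotes the concatenation of w and v, |v| is the length of v, and (v)_2 is the integer value of v interpreted as a binary number. -/
set_option maxRecDepth 4000

/-- The binary value of a word read most-significant-bit first. -/
def binVal (l : List Bool) : ℕ := l.foldl (fun n b => 2 * n + (if b then 1 else 0)) 0

/-- The matrix `T_v` associated to a binary word `v`. -/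
def Tword (v : List Bool) : Matrix (Fin 2) (Fin 2) ℤ :=
  !![(2 : ℤ) ^ v.length - binVal v, (binVal v : ℤ);
     (2 : ℤ) ^ v.length - binVal v - 1, (binVal v : ℤ) + 1]

lemma binVal_foldl (l : List Bool) (n : ℕ) :
    l.foldl (fun n b => 2 * n + (if b then 1 else 0)) n = 2 ^ l.length * n + binVal l := by
  induction l generalizing n with
  | nil => show n = 2 ^ 0 * n + 0; omega
  | cons b t ih =>
    rw [List.foldl_cons, ih]
    have h : binVal (b :: t) = 2 ^ t.length * (2 * 0 + if b then 1 else 0) + binVal t := ih _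
    rw [h, List.length_cons]
    ring

lemma binVal_append (w v : List Bool) :
    binVal (w ++ v) = 2 ^ v.length * binVal w + binVal v := by
  unfold binVal
  rw [List.foldl_append, binVal_foldl]
  rfl

theorem Tword_mul (v w : List Bool) : Tword v * Tword w = Tword (w ++ v) := by
  simp only [Tword, Matrix.mul_fin_two, binVal_append, List.length_append]
  push_cast
  congr 1; ring_nf
end

section
/- For every natural number n ≥ 2, the n-th prime p_n satisfies p_n ≤ n². -/
lemma centralBinom_le_pow (k : ℕ) (hk : 0 < k) :
    Nat.centralBinom k ≤ (2 * k) ^ (Nat.count Nat.Prime (2 * k + 1)) := by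
  have h0 : Nat.centralBinom k =
      ∏ p ∈ (Nat.centralBinom k).factorization.support, p ^ (Nat.centralBinom k).factorization p :=
    (Nat.factorization_prod_pow_eq_self (Nat.centralBinom_pos k).ne').symm
  rw [h0]
  have hsub : (Nat.centralBinom k).factorization.support ⊆
      (Finset.range (2 * k + 1)).filter Nat.Prime := by
    intro p hp
    rw [Nat.support_factorization, Nat.mem_primeFactors] at hp
    refine Finset.mem_filter.mpr ⟨Finset.mem_range.mpr ?_, hp.1⟩
    have hpos : 0 < (Nat.centralBinom k).factorization p :=
      hp.1.factorization_pos_of_dvd (Nat.centralBinom_pos k).ne' hp.2.1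
    have := Nat.le_two_mul_of_factorization_centralBinom_pos hpos
    omega
  calc ∏ p ∈ (Nat.centralBinom k).factorization.support,
        p ^ (Nat.centralBinom k).factorization p
      ≤ ∏ _p ∈ (Nat.centralBinom k).factorization.support, 2 * k := by
        apply Finset.prod_le_prod'
        intro p hp
        exact Nat.pow_factorization_choose_le (by omega)
    _ = (2 * k) ^ (Nat.centralBinom k).factorization.support.card := by
        rw [Finset.prod_const]
    _ ≤ (2 * k) ^ (Nat.count Nat.Prime (2 * k + 1)) := by
        apply Nat.pow_le_pow_right (by omega)
        rw [Nat.count_eq_card_filter_range]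
        exact Finset.card_le_card hsub

lemma two_mul_le_pow (m : ℕ) : 2 * (m + 4) ≤ 2 ^ (m + 3) := by
  induction m with
  | zero => norm_num
  | succ i ih =>
    have h2 : (2:ℕ) ≤ 2 ^ (i + 3) := by
      calc (2:ℕ) = 2 ^ 1 := by norm_num
        _ ≤ 2 ^ (i + 3) := Nat.pow_le_pow_right (by norm_num) (by omega)
    calc 2 * (i + 1 + 4) = 2 * (i + 4) + 2 := by ring
      _ ≤ 2 ^ (i + 3) + 2 ^ (i + 3) := by omega
      _ = 2 ^ (i + 1 + 3) := by ring

lemma clog_bound (n : ℕ) (hn : 7 ≤ n) : 2 * Nat.clog 2 n + 1 ≤ n := by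
  set c := Nat.clog 2 n with hc
  rcases le_or_gt c 3 with h | h
  · omega
  · have h1 : 2 ^ (c - 1) < n := Nat.pow_pred_clog_lt_self (by norm_num) (by omega)
    have h2 : 2 * c ≤ 2 ^ (c - 1) := by
      have := two_mul_le_pow (c - 4)
      have he : c - 4 + 4 = c := by omega
      have he2 : c - 4 + 3 = c - 1 := by omega
      rw [he, he2] at this
      exact this
    omega

theorem nth_prime_le_sq (n : ℕ) (hn : 2 ≤ n) : Nat.nth Nat.Prime (n - 1) ≤ n ^ 2 := by
  rcases le_or_gt n 6 with h6 | h6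
  · interval_cases n
    · show Nat.nth Nat.Prime 1 ≤ 4
      have := Nat.nth_lt_of_lt_count (p := Nat.Prime) (n := 5) (k := 1) (by decide)
      omega
    · show Nat.nth Nat.Prime 2 ≤ 9
      have := Nat.nth_lt_of_lt_count (p := Nat.Prime) (n := 10) (k := 2) (by decide)
      omega
    · show Nat.nth Nat.Prime 3 ≤ 16
      have := Nat.nth_lt_of_lt_count (p := Nat.Prime) (n := 17) (k := 3) (by decide)
      omega
    · show Nat.nth Nat.Prime 4 ≤ 25
      have := Nat.nth_lt_of_lt_count (p := Nat.Prime) (n := 26) (k := 4) (by decide)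
      omega
    · show Nat.nth Nat.Prime 5 ≤ 36
      have := Nat.nth_lt_of_lt_count (p := Nat.Prime) (n := 37) (k := 5) (by decide)
      omega
  -- n ≥ 7
  by_contra hcon
  push_neg at hcon
  have hcount : Nat.count Nat.Prime (n ^ 2 + 1) ≤ n - 1 := by
    by_contra hc
    push_neg at hc
    exact absurd (Nat.nth_lt_of_lt_count hc) (by omega)
  set k := n ^ 2 / 2 with hk
  have hk2 : n ^ 2 - 1 ≤ 2 * k ∧ 2 * k ≤ n ^ 2 := by
    constructor <;> omega
  have hkpos : 0 < k := by
    have : 49 ≤ n ^ 2 := by nlinarith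
    omega
  have h1 : 4 ^ k ≤ 2 * k * (2 * k) ^ (Nat.count Nat.Prime (2 * k + 1)) :=
    le_trans (Nat.four_pow_le_two_mul_self_mul_centralBinom k hkpos)
      (Nat.mul_le_mul_left _ (centralBinom_le_pow k hkpos))
  have hcm : Nat.count Nat.Prime (2 * k + 1) ≤ n - 1 :=
    le_trans (Nat.count_monotone _ (by omega)) hcount
  have h2 : 2 * k * (2 * k) ^ (Nat.count Nat.Prime (2 * k + 1)) ≤ n ^ 2 * (n ^ 2) ^ (n - 1) := by
    apply Nat.mul_le_mul hk2.2
    exact le_trans (Nat.pow_le_pow_left hk2.2 _)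
      (Nat.pow_le_pow_right (by nlinarith) hcm)
  have h3 : n ^ 2 * (n ^ 2) ^ (n - 1) = n ^ (2 * n) := by
    rw [← pow_succ', ← pow_mul]
    congr 1
    omega
  set c := Nat.clog 2 n with hc
  have h4 : n ^ (2 * n) ≤ 2 ^ (c * (2 * n)) := by
    have := Nat.pow_le_pow_left (Nat.le_pow_clog (by norm_num : (1:ℕ) < 2) n) (2 * n)
    rwa [← pow_mul] at this
  have h5 : 2 ^ (2 * k) ≤ 2 ^ (c * (2 * n)) := by
    calc 2 ^ (2 * k) = 4 ^ k := by rw [pow_mul]; norm_num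
      _ ≤ n ^ (2 * n) := by omega
      _ ≤ 2 ^ (c * (2 * n)) := h4
  have h6' : 2 * k ≤ c * (2 * n) :=
    (Nat.pow_le_pow_iff_right (by norm_num)).mp h5
  have hcb : 2 * c + 1 ≤ n := clog_bound n (by omega)
  have h7 : c * (2 * n) ≤ n * n - n := by
    have h2c : 2 * c ≤ n - 1 := by omega
    calc c * (2 * n) = 2 * c * n := by ring
      _ ≤ (n - 1) * n := Nat.mul_le_mul_right _ h2c
      _ = n * n - n := by rw [Nat.sub_one_mul]
  have hpow : n ^ 2 = n * n := by ring
  have hnn : n ≤ n * n := Nat.le_mul_of_pos_left n (by omega)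
  omega
end

section
/- Let U be a finite set of size m, let x = k + 2, and for C ⊆ U (identifying U with {u_1,...,u_m}) define a_C = −(x^{m+1} + Σ_{j : u_j ∈ C} x^j), and y = k·x^{m+1} + Σ_{j=0}^{m} x^j. If C_1, ..., C_k partition U (they are pairwise disjoint and their union is U), then y + a_{C_1} + ⋯ + a_{C_k} = 1. -/
theorem ksum_of_exact_cover (m k : ℕ) (C : Fin k → Finset (Fin m))
    (hdisj : ∀ i j, i ≠ j → Disjoint (C i) (C j))
    (hcover : (Finset.univ : Finset (Fin m)) = Finset.univ.biUnion C) :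
    letI x : ℤ := (k : ℤ) + 2
    letI a : Finset (Fin m) → ℤ := fun S => -(x ^ (m + 1) + ∑ j ∈ S, x ^ ((j : ℕ) + 1))
    letI y : ℤ := k * x ^ (m + 1) + ∑ j ∈ Finset.range (m + 1), x ^ j
    y + ∑ i : Fin k, a (C i) = 1 := by
  set x : ℤ := (k : ℤ) + 2 with hx
  have hsum : ∑ i : Fin k, (∑ j ∈ C i, x ^ ((j : ℕ) + 1))
      = ∑ j : Fin m, x ^ ((j : ℕ) + 1) := by
    rw [show (∑ j : Fin m, x ^ ((j : ℕ) + 1))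
        = ∑ j ∈ (Finset.univ : Finset (Fin m)), x ^ ((j : ℕ) + 1) from rfl,
      hcover, Finset.sum_biUnion]
    intro i _ j _ hij
    exact hdisj i j hij
  have hrange : ∑ j ∈ Finset.range (m + 1), x ^ j
      = (∑ j : Fin m, x ^ ((j : ℕ) + 1)) + 1 := by
    rw [Finset.sum_range_succ', Fin.sum_univ_eq_sum_range (fun j => x ^ (j + 1))]
    simp
  simp only [neg_add, Finset.sum_add_distrib, Finset.sum_neg_distrib, hsum,
    Finset.sum_const, Finset.card_univ, Fintype.card_fin, nsmul_eq_mul, hrange]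
  ring
end

section
/- In the VEST-to-VEST-without-S reduction, define v' by appending entries k and 1 to v, define T'_i by extending T_i with the 2×2 block [[1,−1],[0,1]] acting on the new coordinates (and zeros elsewhere off the diagonal blocks), and define S' by extending S with the 2×2 block [[10,0],[0,0]]. If S T_{i_k} ⋯ T_{i_1} v = 0, then S' T'_{i_k} ⋯ T'_{i_1} v' = 0. -/
lemma prod_fromBlocks {d : ℕ} (L : List (Matrix (Fin d) (Fin d) ℚ × Matrix (Fin 2) (Fin 2) ℚ)) :
    (L.map fun p => Matrix.fromBlocks p.1 0 0 p.2).prod =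
      Matrix.fromBlocks (L.map Prod.fst).prod 0 0 (L.map Prod.snd).prod := by
  induction L with
  | nil => simp [Matrix.fromBlocks_one]
  | cons a l ih =>
      simp [ih, Matrix.fromBlocks_multiply]

lemma pow_shift (k : ℕ) :
    (!![1, -1; 0, 1] : Matrix (Fin 2) (Fin 2) ℚ) ^ k = !![1, -(k : ℚ); 0, 1] := by
  induction k with
  | zero => simp [Matrix.one_fin_two]
  | succ n ih =>
      rw [pow_succ, ih]
      norm_num [Matrix.mul_fin_two]


theorem vest_to_vest_without_S (d h m k : ℕ)
    (S : Matrix (Fin h) (Fin d) ℚ) (T : Fin m → Matrix (Fin d) (Fin d) ℚ)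
    (v : Fin d → ℚ) (ι : Fin k → Fin m)
    (hsol : S.mulVec (((List.ofFn fun j => T (ι j)).prod).mulVec v) = 0) :
    letI S' : Matrix (Fin h ⊕ Fin 2) (Fin d ⊕ Fin 2) ℚ :=
      Matrix.fromBlocks S 0 0 !![10, 0; 0, 0]
    letI T' : Fin m → Matrix (Fin d ⊕ Fin 2) (Fin d ⊕ Fin 2) ℚ :=
      fun i => Matrix.fromBlocks (T i) 0 0 !![1, -1; 0, 1]
    letI v' : (Fin d ⊕ Fin 2) → ℚ := Sum.elim v ![(k : ℚ), 1]
    S'.mulVec (((List.ofFn fun j => T' (ι j)).prod).mulVec v') = 0 := by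

  have h1 : (List.ofFn fun j => Matrix.fromBlocks (T (ι j)) 0 0 (!![1, -1; 0, 1] : Matrix (Fin 2) (Fin 2) ℚ)) =
      (List.ofFn fun j => (T (ι j), (!![1, -1; 0, 1] : Matrix (Fin 2) (Fin 2) ℚ))).map
        (fun p => Matrix.fromBlocks p.1 0 0 p.2) := by
    rw [List.map_ofFn]; rfl
  rw [h1, prod_fromBlocks]
  have h2 : ((List.ofFn fun j => (T (ι j), (!![1, -1; 0, 1] : Matrix (Fin 2) (Fin 2) ℚ))).map
      Prod.fst).prod = (List.ofFn fun j => T (ι j)).prod := by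
    rw [List.map_ofFn]; rfl
  have h3 : ((List.ofFn fun j => (T (ι j), (!![1, -1; 0, 1] : Matrix (Fin 2) (Fin 2) ℚ))).map
      Prod.snd).prod = !![1, -(k : ℚ); 0, 1] := by
    rw [List.map_ofFn, ← pow_shift k]
    rw [show (Prod.snd ∘ fun j : Fin k => (T (ι j), (!![1, -1; 0, 1] : Matrix (Fin 2) (Fin 2) ℚ)))
      = fun _ => !![1, -1; 0, 1] from rfl]
    simp [List.prod_ofFn]
  rw [h2, h3]
  have h4 : (!![1, -(k:ℚ); 0, 1]).mulVec ![(k : ℚ), 1] = ![0, 1] := by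
    funext i
    fin_cases i <;> simp [Matrix.mulVec, dotProduct, Fin.sum_univ_two]
  have h5 : (!![(10:ℚ), 0; 0, 0]).mulVec ![0, 1] = 0 := by
    funext i
    fin_cases i <;> simp [Matrix.mulVec, dotProduct, Fin.sum_univ_two]
  simp [Matrix.fromBlocks_mulVec, Sum.elim_comp_inl, Sum.elim_comp_inr, h4, h5, hsol]
end
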